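/- Let A be an m×n integer matrix all of whose subdeterminants have absolute value at most Δ. Then there exists a subset J of the column indices with |J| ≤ log₂ Δ such that for every row index i, either all entries of row i lie in {-1,0,1}, or there is some j ∈ J with A_{ij} ≠ 0. -/

import Mathlib

/-- An integer matrix is totally `Δ`-modular if every square submatrix (of any size)
has determinant of absolute value at most `Δ`. -/
def TotallyDeltaModular {m n : ℕ} (A : Matrix (Fin m) (Fin n) ℤ) (Δ : ℤ) : Prop :=
  ∀ (k : ℕ) (f : Fin k → Fin m) (g : Fin k → Fin n),
    Function.Injective f → Function.Injective g → |(A.submatrix f g).det| ≤ Δ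

/-- if all subdeterminants of `A` have absolute value at most `Δ`, then there
is a set `J` of at most `log₂ Δ` columns such that every row either has all entries in
`{-1,0,1}` or has a nonzero entry in some column of `J`. -/
theorem stmt0 {m n : ℕ} (A : Matrix (Fin m) (Fin n) ℤ) (Δ : ℤ) (hΔ : 1 ≤ Δ)
    (hA : TotallyDeltaModular A Δ) :
    ∃ J : Finset (Fin n), (J.card : ℝ) ≤ Real.logb 2 (Δ : ℝ) ∧
      ∀ i : Fin m, (∀ j, A i j ∈ ({-1, 0, 1} : Set ℤ)) ∨ ∃ j ∈ J, A i j ≠ 0 := by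
  classical
  set Q : ℕ → Prop := fun k => ∃ (f : Fin k → Fin m) (g : Fin k → Fin n),
      Function.Injective f ∧ Function.Injective g ∧
      (2 : ℤ) ^ k ≤ |(A.submatrix f g).det| with hQdef
  have hQ0 : Q 0 := ⟨Fin.elim0, Fin.elim0, fun a => a.elim0, fun a => a.elim0, by simp⟩
  have hbound : ∀ k, Q k → (2 : ℤ) ^ k ≤ Δ := by
    rintro k ⟨f, g, hf, hg, hd⟩
    exact hd.trans (hA k f g hf hg)
  have hkb : ∀ k, Q k → k ≤ Δ.toNat := by
    intro k hk
    have h1 : (2 : ℤ) ^ k ≤ Δ := hbound k hk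
    have h2 : (k : ℤ) < 2 ^ k := by
      have := Nat.lt_two_pow_self (n := k)
      exact_mod_cast this
    omega
  set K := Nat.findGreatest Q Δ.toNat with hK
  have hQK : Q K := Nat.findGreatest_spec (Nat.zero_le _) hQ0
  have hmax : ¬ Q (K + 1) := by
    intro h
    exact Nat.findGreatest_is_greatest (Nat.lt_succ_self _) (hkb _ h) h
  obtain ⟨f, g, hf, hg, hdet⟩ := hQK
  refine ⟨Finset.image g Finset.univ, ?_, ?_⟩
  · have hcard : (Finset.image g Finset.univ).card ≤ K :=
      (Finset.card_image_le).trans (by simp)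
    have h2K : (2 : ℝ) ^ (K : ℝ) ≤ (Δ : ℝ) := by
      rw [Real.rpow_natCast]
      exact_mod_cast hbound K ⟨f, g, hf, hg, hdet⟩
    have hKlog : (K : ℝ) ≤ Real.logb 2 (Δ : ℝ) := by
      rw [Real.le_logb_iff_rpow_le one_lt_two (by exact_mod_cast lt_of_lt_of_le one_pos hΔ)]
      exact h2K
    exact le_trans (by exact_mod_cast hcard) hKlog
  · intro i
    by_cases hex : ∃ j ∈ Finset.image g Finset.univ, A i j ≠ 0
    · exact Or.inr hex
    push_neg at hex
    left
    intro j
    by_contra hj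
    simp only [Set.mem_insert_iff, Set.mem_singleton_iff] at hj
    push_neg at hj
    have habs : 2 ≤ |A i j| := by rw [le_abs]; omega
    have hzero : ∀ t, A i (g t) = 0 := fun t =>
      hex (g t) (Finset.mem_image_of_mem g (Finset.mem_univ t))
    -- row i is not among the chosen rows
    have hdetne : (A.submatrix f g).det ≠ 0 := by
      intro h0
      rw [h0, abs_zero] at hdet
      exact absurd hdet (not_le.mpr (by positivity))
    have hif : ∀ s, f s ≠ i := by
      intro s hs
      exact hdetne (Matrix.det_eq_zero_of_row_eq_zero s (fun t => by
        simp [Matrix.submatrix_apply, hs, hzero t]))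
    have hAij : A i j ≠ 0 := by intro h; rw [h] at habs; simp at habs
    -- build the extended submatrix
    apply hmax
    set f' : Fin (K + 1) → Fin m := (Sum.elim f fun _ : Fin 1 => i) ∘ finSumFinEquiv.symm
      with hf'def
    set g' : Fin (K + 1) → Fin n := (Sum.elim g fun _ : Fin 1 => j) ∘ finSumFinEquiv.symm
      with hg'def
    have hjg : ∀ t, g t ≠ j := by
      intro t ht
      exact hAij (ht ▸ hzero t)
    have hf' : Function.Injective f' :=
      (Function.Injective.sumElim hf (fun a b h => Subsingleton.elim a b)
        (fun a b => hif a)).comp finSumFinEquiv.symm.injective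
    have hg' : Function.Injective g' :=
      (Function.Injective.sumElim hg (fun a b h => Subsingleton.elim a b)
        (fun a b => hjg a)).comp finSumFinEquiv.symm.injective
    refine ⟨f', g', hf', hg', ?_⟩
    have hblock : A.submatrix f' g' =
        (Matrix.fromBlocks (A.submatrix f g) (fun s (_ : Fin 1) => A (f s) j)
          0 (fun (_ _ : Fin 1) => A i j)).submatrix
          finSumFinEquiv.symm finSumFinEquiv.symm := by
      ext s t
      simp only [Matrix.submatrix_apply, hf'def, hg'def, Function.comp_apply]
      rcases hs : finSumFinEquiv.symm s with a | a <;>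
        rcases ht : finSumFinEquiv.symm t with b | b <;>
        simp [Matrix.fromBlocks, hzero]
    erw [hblock, Matrix.det_submatrix_equiv_self, Matrix.det_fromBlocks_zero₂₁,
      Matrix.det_fin_one]
    rw [abs_mul]
    calc (2 : ℤ) ^ (K + 1) = 2 ^ K * 2 := by ring
    _ ≤ |(A.submatrix f g).det| * |(fun (_ _ : Fin 1) => A i j) 0 0| := by
        apply mul_le_mul hdet _ (by norm_num) (abs_nonneg _)
        simpa using habs
    _ = _ := rfl
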